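/- There are no positive integers x, y such that x⁴ - 4y⁴ is a positive perfect square. -/
import Mathlib


theorem stmt_8 : ¬ ∃ x y z : ℤ, 0 < x ∧ 0 < y ∧ 0 < z ∧ x ^ 4 - 4 * y ^ 4 = z ^ 2 := by
  rintro ⟨x, y, z, hx, hy, hz, h⟩
  have := not_fermat_42 (a := z) (b := 2 * x * y) (c := x ^ 4 + 4 * y ^ 4)
    hz.ne' (by positivity)
  apply this
  nlinarith [sq_nonneg z, sq_nonneg (x*y)]
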